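/- For a vector bundle E → M, the function assigning to u ∈ ∧²TE with ∧²Tτ(u) = w the functional g_u(v) = d_T^2 δ_E(u,v) on the fiber over w of ∧²T(E*⊗T*M)/V² satisfies: g_u = g_{u'} for u, u' in the same fiber of ∧²Tτ and τ²_E if and only if u − u' ∈ V²(E); consequently the fibration ∧²TE/V²(E) → ∧²TM carries a canonical vector bundle structure whose linear functions along fibers are the g_u-type pairings, with linear coordinates (e^a, y^{μb}) over base coordinates (x^μ, ẋ^{λν}). -/
import Mathlib


noncomputable section

/-- Coordinate model of vectors: functions on an index set. -/
abbrev Vec (ι : Type) := ι → ℝ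

/-- Coordinate model of bivectors on `Vec ι`: (antisymmetric) matrices. -/
abbrev Biv (ι : Type) := ι → ι → ℝ

/-- Antisymmetry of a bivector matrix. -/
def IsAnti {ι : Type} (u : Biv ι) : Prop := ∀ a b, u a b = - u b a

/-- Raw coordinate model of the exterior derivative of a `k`-form
(given as a function of a point and `k` tangent vectors). -/
def Dext {A : Type} [NormedAddCommGroup A] [NormedSpace ℝ A] {k : ℕ}
    (φ : A → (Fin k → A) → ℝ) : A → (Fin (k+1) → A) → ℝ :=
  fun x w => ∑ i : Fin (k+1), (-1 : ℝ)^(i : ℕ) *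
    fderiv ℝ (fun y => φ y (fun j => w (i.succAbove j))) x (w i)

/-- Pull-back of a raw `k`-form along a map. -/
def pullF {A B : Type} [NormedAddCommGroup A] [NormedSpace ℝ A]
    [NormedAddCommGroup B] [NormedSpace ℝ B] {k : ℕ}
    (f : A → B) (φ : B → (Fin k → B) → ℝ) : A → (Fin k → A) → ℝ :=
  fun x w => φ (f x) (fun i => fderiv ℝ f x (w i))

/-- The operator `i_T^2`: insertion of the bivector into the first two slots of a
`(k+2)`-form on the base, producing a semi-basic `k`-form on `∧²TN`
(modelled on `Vec ι × Biv ι`; only the base components of the arguments are used,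
reflecting semi-basicity). -/
def iT2 {ι : Type} [Fintype ι] [DecidableEq ι] {k : ℕ}
    (φ : Vec ι → (Fin (k+2) → Vec ι) → ℝ) :
    (Vec ι × Biv ι) → (Fin k → Vec ι × Biv ι) → ℝ :=
  fun p w => (1/2 : ℝ) * ∑ a, ∑ b, p.2 a b *
    φ p.1 (Matrix.vecCons (Pi.single a 1)
      (Matrix.vecCons (Pi.single b 1) (fun i => (w i).1)))

/-- The operator `d_T^2 = d ∘ i_T^2 − i_T^2 ∘ d` on `(k+2)`-forms, `k ≥ 0`. -/
def dT2 {ι : Type} [Fintype ι] [DecidableEq ι] {k : ℕ}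
    (φ : Vec ι → (Fin (k+2) → Vec ι) → ℝ) :
    (Vec ι × Biv ι) → (Fin (k+1) → Vec ι × Biv ι) → ℝ :=
  fun p w => Dext (iT2 φ) p w - iT2 (Dext φ) p w

/-- `i_T^2` on 1-forms lands in `(−1)`-forms, i.e. is zero. -/
def iT2one {ι : Type} (_φ : Vec ι → (Fin 1 → Vec ι) → ℝ) :
    (Vec ι × Biv ι) → ℝ := fun _ => 0

/-- `d_T^2` on 1-forms: `d ∘ i_T^2 − i_T^2 ∘ d = − i_T^2 ∘ d`. -/
def dT2one {ι : Type} [Fintype ι] [DecidableEq ι]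
    (φ : Vec ι → (Fin 1 → Vec ι) → ℝ) : (Vec ι × Biv ι) → ℝ :=
  fun p => - iT2 (Dext φ) p (fun i => i.elim0)

end

noncomputable section

/-!
STATEMENT 19: For a vector bundle `E → M`, the functional
`g_u(v) = d_T^2 δ_E(u,v)` on the fiber of `∧²T(E*⊗T*M)/V²` over `w = ∧²Tτ(u)`, which in
coordinates is `g_u(v) = −e^a y^ν_{aν}(v) − f_{aν} y^{νa}(u)`, satisfies:
`g_u = g_{u'}` for `u, u'` in the same fiber of `∧²Tτ` if and only if
`τ²_E(u) = τ²_E(u')` and `u − u' ∈ V²(E)`.  Consequently the fibration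
`∧²TE/V²(E) → ∧²TM` carries a canonical vector bundle structure whose fiberwise linear
functions are the pairings `g_u`, with linear fiber coordinates `(e^a, y^{μb})`.

Coordinate model: `u ∈ ∧²TE` is an antisymmetric matrix over `ιM ⊕ ιA` at a point with
`E`-fiber coordinates `e : Vec ιA`; `v` is described by the fiber coordinates
`f : ιA → ιM → ℝ` of `E*⊗T*M` and the mixed components `y_v : ιM → ιA × ιM → ℝ` of a
bivector on `E*⊗T*M`; `y^{νa}(u) = u (inl ν) (inr a)`.
-/

lemma gu_key_extraction {ιM ιA : Type} [Fintype ιM] [DecidableEq ιM] [Nonempty ιM]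
    [Fintype ιA] [DecidableEq ιA]
    (e e' : ιA → ℝ) (yu yu' : ιM → ιA → ℝ)
    (h : (fun v : (ιA → ιM → ℝ) × (ιM → ιA × ιM → ℝ) =>
      - (∑ a, ∑ ν, e a * v.2 ν (a, ν)) - (∑ a, ∑ ν, v.1 a ν * yu ν a)) =
      (fun v => - (∑ a, ∑ ν, e' a * v.2 ν (a, ν)) - (∑ a, ∑ ν, v.1 a ν * yu' ν a))) :
    e = e' ∧ yu = yu' := by
  obtain ⟨ν0⟩ := ‹Nonempty ιM›
  constructor
  · funext a
    have h1 := congrFun h (0, fun ν p => if p = (a, ν0) ∧ ν = ν0 then 1 else 0)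
    simp only [Prod.mk.injEq, Pi.zero_apply, zero_mul, Finset.sum_const_zero,
      sub_zero, mul_ite, mul_one, mul_zero, neg_inj] at h1
    have key : ∀ (f : ιA → ℝ),
        (∑ a', ∑ ν, if (a' = a ∧ ν = ν0) ∧ ν = ν0 then f a' else 0) = f a := by
      intro f
      rw [Finset.sum_comm]
      rw [Finset.sum_eq_single ν0]
      · simp
      · intro b _ hb; simp [hb]
      · simp
    rw [key e, key e'] at h1
    exact h1
  · funext ν a
    have h1 := congrFun h (fun a' ν' => if a' = a ∧ ν' = ν then 1 else 0, 0)
    simp only [Pi.zero_apply, mul_zero, Finset.sum_const_zero, neg_zero, zero_sub,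
      ite_mul, one_mul, zero_mul, neg_inj] at h1
    have key : ∀ (f : ιM → ιA → ℝ),
        (∑ a', ∑ ν', if a' = a ∧ ν' = ν then f ν' a' else 0) = f ν a := by
      intro f
      rw [Finset.sum_eq_single a]
      · simp
      · intro b _ hb; simp [hb]
      · simp
    rw [key yu, key yu'] at h1
    exact h1

theorem gu_well_defined_and_linear_structure
    {ιM ιA : Type} [Fintype ιM] [DecidableEq ιM] [Nonempty ιM]
    [Fintype ιA] [DecidableEq ιA]
    (gval : Vec ιA → (ιM → ιA → ℝ) → ((ιA → ιM → ℝ) × (ιM → ιA × ιM → ℝ)) → ℝ)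
    (hg : gval = fun e yu v =>
      - (∑ a, ∑ ν, e a * v.2 ν (a, ν)) - (∑ a, ∑ ν, v.1 a ν * yu ν a)) :
    -- `g_u = g_{u'}` iff `τ²_E(u) = τ²_E(u')` and `u − u' ∈ V²(E)`:
    (∀ (e e' : Vec ιA) (u u' : Biv (ιM ⊕ ιA)), IsAnti u → IsAnti u' →
      (∀ μ ν, u (Sum.inl μ) (Sum.inl ν) = u' (Sum.inl μ) (Sum.inl ν)) →
      ((gval e (fun ν a => u (Sum.inl ν) (Sum.inr a)) =
        gval e' (fun ν a => u' (Sum.inl ν) (Sum.inr a)))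
        ↔ (e = e' ∧ ∀ ν a, u (Sum.inl ν) (Sum.inr a) = u' (Sum.inl ν) (Sum.inr a)))) ∧
    -- hence the fiber data `(e^a, y^{μb})` are linear coordinates: the assignment
    -- `(e, y) ↦ g_{(e,y)}` is linear and injective into functionals on the `v`-fiber:
    IsLinearMap ℝ (fun p : Vec ιA × (ιM → ιA → ℝ) => gval p.1 p.2) ∧
    Function.Injective (fun p : Vec ιA × (ιM → ιA → ℝ) => gval p.1 p.2) := by
  subst hg
  refine ⟨?_, ?_, ?_⟩
  · intro e e' u u' _ _ _
    constructor
    · intro h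
      obtain ⟨h1, h2⟩ := gu_key_extraction e e' _ _ h
      exact ⟨h1, fun ν a => congrFun (congrFun h2 ν) a⟩
    · rintro ⟨rfl, h2⟩
      have : (fun ν a => u (Sum.inl ν) (Sum.inr a)) =
          (fun ν a => u' (Sum.inl ν) (Sum.inr a)) := by
        funext ν a; exact h2 ν a
      rw [this]
  · constructor
    · intro p q
      funext v
      simp only [Prod.fst_add, Prod.snd_add, Pi.add_apply, add_mul, mul_add,
        Finset.sum_add_distrib]
      ring
    · intro c p
      funext v
      simp only [Prod.smul_fst, Prod.smul_snd, Pi.smul_apply, smul_eq_mul,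
        mul_sub, mul_neg, Finset.mul_sum]
      congr 1
      · congr 1
        apply Finset.sum_congr rfl; intro a _
        apply Finset.sum_congr rfl; intro ν _
        ring
      · apply Finset.sum_congr rfl; intro a _
        apply Finset.sum_congr rfl; intro ν _
        ring
  · intro p q h
    obtain ⟨h1, h2⟩ := gu_key_extraction p.1 q.1 p.2 q.2 h
    exact Prod.ext h1 h2

end
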